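/- Let (Ω, μ) be a finite probability space of configurations {0,1}^E with the random-cluster weights, q ≥ 1. If A is an increasing event, then (d/dp) φ_{p}(A) = (1/(p(1−p))) · Cov_p(o(ω), 1_A), where o(ω) is the number of open edges, and in particular this derivative is nonnegative. -/

import Mathlib

open Finset

/-- Number of connected components of the subgraph of open edges. -/
noncomputable def rcClusters0 {V : Type} (G : SimpleGraph V) (ω : Sym2 V → Bool) : ℕ :=
  Nat.card (Quotient (Relation.EqvGen.setoid (fun x y => G.Adj x y ∧ ω s(x, y) = true)))

/-- Number of open edges. -/
def rcOpen {V : Type} [Fintype V] [DecidableEq V] (G : SimpleGraph V)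
    [DecidableRel G.Adj] (ω : Sym2 V → Bool) : ℕ :=
  (G.edgeFinset.filter (fun e => ω e = true)).card

/-- Random-cluster weight. -/
noncomputable def rcWeight0 {V : Type} [Fintype V] [DecidableEq V] (G : SimpleGraph V)
    [DecidableRel G.Adj] (p q : ℝ) (ω : Sym2 V → Bool) : ℝ :=
  q ^ rcClusters0 G ω * p ^ rcOpen G ω * (1 - p) ^ (G.edgeFinset.card - rcOpen G ω)

/-- Random-cluster probability of a single configuration. -/
noncomputable def rcPoint0 {V : Type} [Fintype V] [DecidableEq V] (G : SimpleGraph V)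
    [DecidableRel G.Adj] (p q : ℝ) (ω : Sym2 V → Bool) : ℝ :=
  rcWeight0 G p q ω / ∑ ω' : Sym2 V → Bool, rcWeight0 G p q ω'

/-- Random-cluster probability of an event. -/
noncomputable def rcProb0 {V : Type} [Fintype V] [DecidableEq V] (G : SimpleGraph V)
    [DecidableRel G.Adj] (p q : ℝ) (A : Finset (Sym2 V → Bool)) : ℝ :=
  (∑ ω ∈ A, rcWeight0 G p q ω) / ∑ ω : Sym2 V → Bool, rcWeight0 G p q ω


open Relation

noncomputable def qcard {V : Type} (r : V → V → Prop) : ℕ :=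
  Nat.card (Quotient (Relation.EqvGen.setoid r))

lemma qcard_congr {V : Type} {r s : V → V → Prop} (h : ∀ a b, r a b ↔ s a b) :
    qcard r = qcard s := by
  have : r = s := by funext a b; exact propext (h a b)
  rw [this]

section Abstract
variable {V : Type} [Finite V]

lemma eqvGen_bind {r s : V → V → Prop} (h : ∀ a b, r a b → EqvGen s a b) {a b : V}
    (hab : EqvGen r a b) : EqvGen s a b := by
  induction hab with
  | rel a b hab => exact h _ _ hab
  | refl a => exact EqvGen.refl a
  | symm a b _ ih => exact ih.symm _ _
  | trans a b c _ _ ih1 ih2 => exact ih1.trans _ _ _ ih2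

/-- adding a pair already in the eqv closure doesn't change the quotient -/
lemma qcard_add_connected {r : V → V → Prop} {u v : V} (h : EqvGen r u v) :
    qcard (fun a b => r a b ∨ (a = u ∧ b = v) ∨ (a = v ∧ b = u)) = qcard r := by
  unfold qcard
  apply Nat.card_congr
  refine Quotient.congrRight (fun a b => ?_)
  show EqvGen _ a b ↔ EqvGen _ a b
  constructor
  · refine eqvGen_bind (fun a b hab => ?_)
    rcases hab with hab | ⟨rfl, rfl⟩ | ⟨rfl, rfl⟩
    · exact EqvGen.rel _ _ hab
    · exact h
    · exact h.symm _ _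
  · exact Relation.EqvGen.mono (fun a b hab => Or.inl hab) a b

/-- decomposition of the equivalence closure after adding one pair -/
lemma eqvGen_add_decomp {r : V → V → Prop} {u v a b : V}
    (h : EqvGen (fun a b => r a b ∨ (a = u ∧ b = v) ∨ (a = v ∧ b = u)) a b) :
    EqvGen r a b ∨ (EqvGen r a u ∧ EqvGen r b v) ∨ (EqvGen r a v ∧ EqvGen r b u) := by
  induction h with
  | rel a b hab =>
    rcases hab with hab | ⟨rfl, rfl⟩ | ⟨rfl, rfl⟩
    · exact Or.inl (EqvGen.rel _ _ hab)
    · exact Or.inr (Or.inl ⟨EqvGen.refl _, EqvGen.refl _⟩)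
    · exact Or.inr (Or.inr ⟨EqvGen.refl _, EqvGen.refl _⟩)
  | refl a => exact Or.inl (EqvGen.refl a)
  | symm a b _ ih =>
    rcases ih with h1 | ⟨h1, h2⟩ | ⟨h1, h2⟩
    · exact Or.inl (h1.symm _ _)
    · exact Or.inr (Or.inr ⟨h2, h1⟩)
    · exact Or.inr (Or.inl ⟨h2, h1⟩)
  | trans a b c _ _ ih1 ih2 =>
    rcases ih1 with h1 | ⟨h1, h1'⟩ | ⟨h1, h1'⟩ <;>
      rcases ih2 with h2 | ⟨h2, h2'⟩ | ⟨h2, h2'⟩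
    · exact Or.inl (h1.trans _ _ _ h2)
    · exact Or.inr (Or.inl ⟨h1.trans _ _ _ h2, h2'⟩)
    · exact Or.inr (Or.inr ⟨h1.trans _ _ _ h2, h2'⟩)
    · exact Or.inr (Or.inl ⟨h1, (h2.symm _ _).trans _ _ _ h1'⟩)
    · -- a~u,b~v ; b~u,c~v : a ~ u ~ b? no: b~u gives u~b? we have h1:a~u h1':b~v h2:b~u h2':c~v
      exact Or.inl ((h1.trans _ _ _ ((h2.symm _ _).trans _ _ _ (h1'.trans _ _ _ ((h2'.symm _ _))))))
    · -- h1:a~u h1':b~v h2:b~v h2':c~u : a~u, c~u → a~c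
      exact Or.inl (h1.trans _ _ _ (h2'.symm _ _))
    · exact Or.inr (Or.inr ⟨h1, (h2.symm _ _).trans _ _ _ h1'⟩)
    · -- h1:a~v h1':b~u h2:b~u h2':c~v : a~v, c~v → a~c
      exact Or.inl (h1.trans _ _ _ (h2'.symm _ _))
    · -- h1:a~v h1':b~u h2:b~v h2':c~u : a~v~b~u~c
      exact Or.inl (h1.trans _ _ _ ((h2.symm _ _).trans _ _ _ (h1'.trans _ _ _ (h2'.symm _ _))))

lemma qcard_le_of_le {r s : V → V → Prop} (h : ∀ a b, r a b → s a b) : qcard s ≤ qcard r := by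
  have : Finite (Quotient (Relation.EqvGen.setoid r)) := Quotient.finite _
  exact Nat.card_le_card_of_surjective
    (Quotient.map' id (fun a b hab => Relation.EqvGen.mono h _ _ hab))
    (fun x => Quotient.inductionOn' x (fun a => ⟨Quotient.mk'' a, rfl⟩))

/-- adding a genuinely new pair drops the count by exactly one -/
lemma qcard_add_not_connected {r : V → V → Prop} {u v : V} (h : ¬ EqvGen r u v) :
    qcard r = qcard (fun a b => r a b ∨ (a = u ∧ b = v) ∨ (a = v ∧ b = u)) + 1 := by
  set s := fun a b => r a b ∨ (a = u ∧ b = v) ∨ (a = v ∧ b = u) with hs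
  haveI hF1 : Finite (Quotient (Relation.EqvGen.setoid r)) := Quotient.finite _
  haveI hF2 : Finite (Quotient (Relation.EqvGen.setoid s)) := Quotient.finite _
  have f : Quotient (Relation.EqvGen.setoid r) → Quotient (Relation.EqvGen.setoid s) :=
    Quotient.map' id (fun a b hab => Relation.EqvGen.mono (fun a b h => Or.inl h) _ _ hab)
  -- upper bound : qcard r ≤ qcard s + 1 via injection into Option
  have hle : qcard r ≤ qcard s + 1 := by
    classical
    have hinj : Function.Injective (fun c : Quotient (Relation.EqvGen.setoid r) =>
        if c = Quotient.mk'' v then (none : Option (Quotient (Relation.EqvGen.setoid s)))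
        else some (Quotient.map' id (fun a b hab => Relation.EqvGen.mono (fun a b h => Or.inl h) _ _ hab) c)) := by
      intro c1 c2 hc
      by_cases h1 : c1 = Quotient.mk'' v <;> by_cases h2 : c2 = Quotient.mk'' v
      · exact h1.trans h2.symm
      · simp [h1, h2] at hc
      · simp [h1, h2] at hc
      · simp only [h1, h2, if_false, Option.some.injEq] at hc
        obtain ⟨a, rfl⟩ := Quotient.exists_rep c1
        obtain ⟨b, rfl⟩ := Quotient.exists_rep c2
        have : EqvGen s a b := by
          have h5 := hc
          rw [show (⟦a⟧ : Quotient (Relation.EqvGen.setoid r)) = Quotient.mk'' a from rfl,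
            show (⟦b⟧ : Quotient (Relation.EqvGen.setoid r)) = Quotient.mk'' b from rfl,
            Quotient.map'_mk'', Quotient.map'_mk''] at h5
          exact Quotient.eq''.mp h5
        rcases eqvGen_add_decomp this with h3 | ⟨h3, h4⟩ | ⟨h3, h4⟩
        · exact Quotient.sound h3
        · exact absurd (Quotient.sound h4 : (⟦b⟧ : Quotient (Relation.EqvGen.setoid r)) = ⟦v⟧) h2
        · exact absurd (Quotient.sound h3 : (⟦a⟧ : Quotient (Relation.EqvGen.setoid r)) = ⟦v⟧) h1
    letI := Fintype.ofFinite (Quotient (Relation.EqvGen.setoid s))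
    calc qcard r ≤ Nat.card (Option (Quotient (Relation.EqvGen.setoid s))) :=
          Nat.card_le_card_of_injective _ hinj
      _ = qcard s + 1 := by
          simp [Nat.card_eq_fintype_card, qcard]
  -- strict : qcard s < qcard r
  have hlt : qcard s < qcard r := by
    refine lt_of_le_of_ne (qcard_le_of_le (fun a b h => Or.inl h)) (fun heq => ?_)
    have hsurj : Function.Surjective
        (Quotient.map' (s₁ := Relation.EqvGen.setoid r) (s₂ := Relation.EqvGen.setoid s) id
          (fun a b hab => Relation.EqvGen.mono (fun a b h => Or.inl h) _ _ hab)) :=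
      fun x => Quotient.inductionOn' x (fun a => ⟨Quotient.mk'' a, rfl⟩)
    have hbij := (Nat.bijective_iff_surjective_and_card _).mpr ⟨hsurj, heq.symm⟩
    have huv : (Quotient.mk'' u : Quotient (Relation.EqvGen.setoid r)) = Quotient.mk'' v := by
      apply hbij.injective
      rw [Quotient.map'_mk'', Quotient.map'_mk'']
      exact Quotient.sound (EqvGen.rel _ _ (Or.inr (Or.inl ⟨rfl, rfl⟩)))
    exact h (Quotient.eq''.mp huv)
  omega

end Abstract

section Graph
variable {V : Type} [Fintype V] [DecidableEq V] (G : SimpleGraph V) [DecidableRel G.Adj]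

def rcRel (ω : Sym2 V → Bool) : V → V → Prop := fun x y => G.Adj x y ∧ ω s(x, y) = true

example (ω : Sym2 V → Bool) : True := trivial

def sflip (ν : Sym2 V → Bool) (e : Sym2 V) : Sym2 V → Bool :=
  fun e' => if e' = e then true else ν e'

lemma rcRel_sflip_adj {u v : V} (h : G.Adj u v) (ν : Sym2 V → Bool) (a b : V) :
    rcRel G (sflip ν s(u,v)) a b ↔
      (rcRel G ν a b ∨ (a = u ∧ b = v) ∨ (a = v ∧ b = u)) := by
  unfold rcRel sflip
  constructor
  · rintro ⟨hadj, hb⟩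
    by_cases heq : s(a,b) = s(u,v)
    · rcases Sym2.eq_iff.mp heq with ⟨rfl, rfl⟩ | ⟨rfl, rfl⟩
      · exact Or.inr (Or.inl ⟨rfl, rfl⟩)
      · exact Or.inr (Or.inr ⟨rfl, rfl⟩)
    · rw [if_neg heq] at hb
      exact Or.inl ⟨hadj, hb⟩
  · rintro (⟨hadj, hb⟩ | ⟨rfl, rfl⟩ | ⟨rfl, rfl⟩)
    · refine ⟨hadj, ?_⟩
      by_cases heq : s(a,b) = s(u,v)
      · rw [if_pos heq]
      · rw [if_neg heq]; exact hb
    · exact ⟨h, by rw [if_pos rfl]⟩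
    · exact ⟨h.symm, by rw [if_pos (Sym2.eq_swap)]⟩

lemma rcRel_sflip_nonadj {u v : V} (h : ¬ G.Adj u v) (ν : Sym2 V → Bool) (a b : V) :
    rcRel G (sflip ν s(u,v)) a b ↔ rcRel G ν a b := by
  unfold rcRel sflip
  constructor
  · rintro ⟨hadj, hb⟩
    by_cases heq : s(a,b) = s(u,v)
    · exfalso
      rcases Sym2.eq_iff.mp heq with ⟨rfl, rfl⟩ | ⟨rfl, rfl⟩
      · exact h hadj
      · exact h hadj.symm
    · rw [if_neg heq] at hb
      exact ⟨hadj, hb⟩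
  · rintro ⟨hadj, hb⟩
    refine ⟨hadj, ?_⟩
    by_cases heq : s(a,b) = s(u,v)
    · rw [if_pos heq]
    · rw [if_neg heq]; exact hb

lemma rcRel_mono {ν ν' : Sym2 V → Bool} (h : ν ≤ ν') (a b : V) :
    rcRel G ν a b → rcRel G ν' a b := by
  rintro ⟨hadj, hb⟩
  refine ⟨hadj, ?_⟩
  have := h s(a,b)
  rw [hb] at this
  exact le_antisymm (Bool.le_true _) this |>.symm ▸ (by
    revert this
    cases ν' s(a,b) <;> simp)

end Graph

-- copies of abstract lemmas assumed available: qcard_le_of_le, qcard_add_connected, qcard_add_not_connected, qcard_congr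

section Graph2
variable {V : Type} [Fintype V] [DecidableEq V] (G : SimpleGraph V) [DecidableRel G.Adj]

lemma qcard_single (ν ν' : Sym2 V → Bool) (hle : ν ≤ ν') (e : Sym2 V) :
    qcard (rcRel G (sflip ν e)) + qcard (rcRel G ν') ≤
      qcard (rcRel G ν) + qcard (rcRel G (sflip ν' e)) := by
  induction e using Sym2.ind with
  | _ u v =>
  by_cases hadj : G.Adj u v
  · rw [qcard_congr (rcRel_sflip_adj G hadj ν), qcard_congr (rcRel_sflip_adj G hadj ν')]
    by_cases hconn : EqvGen (rcRel G ν') u v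
    · rw [qcard_add_connected hconn]
      have := qcard_le_of_le (r := rcRel G ν)
        (s := fun a b => rcRel G ν a b ∨ (a = u ∧ b = v) ∨ (a = v ∧ b = u))
        (fun a b h => Or.inl h)
      omega
    · have hconn' : ¬ EqvGen (rcRel G ν) u v := fun h =>
        hconn (Relation.EqvGen.mono (rcRel_mono G hle) _ _ h)
      have e1 := qcard_add_not_connected hconn'
      have e2 := qcard_add_not_connected hconn
      omega
  · rw [qcard_congr (rcRel_sflip_nonadj G hadj ν), qcard_congr (rcRel_sflip_nonadj G hadj ν')]

def openup (ν : Sym2 V → Bool) (D : Finset (Sym2 V)) : Sym2 V → Bool :=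
  fun e => ν e || decide (e ∈ D)

lemma openup_empty (ν : Sym2 V → Bool) : openup ν (∅ : Finset (Sym2 V)) = ν := by
  funext e; simp [openup]

lemma openup_insert (ν : Sym2 V → Bool) (e : Sym2 V) (D : Finset (Sym2 V)) :
    openup ν (insert e D) = sflip (openup ν D) e := by
  funext e'
  by_cases h : e' = e <;> simp [openup, sflip, h]

lemma openup_mono {ν ν' : Sym2 V → Bool} (h : ν ≤ ν') (D : Finset (Sym2 V)) :
    openup ν D ≤ openup ν' D := by
  intro e
  have := h e
  simp only [openup]
  cases hd : decide (e ∈ D) <;> simp [this]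

lemma qcard_chain (D : Finset (Sym2 V)) :
    ∀ ν ν' : Sym2 V → Bool, ν ≤ ν' →
      qcard (rcRel G (openup ν D)) + qcard (rcRel G ν') ≤
        qcard (rcRel G ν) + qcard (rcRel G (openup ν' D)) := by
  induction D using Finset.induction_on with
  | empty => intro ν ν' _; rw [openup_empty, openup_empty]
  | insert e D he ih =>
    intro ν ν' hle
    rw [openup_insert, openup_insert]
    have h1 := qcard_single G (openup ν D) (openup ν' D) (openup_mono hle D) e
    have h2 := ih ν ν' hle
    omega

lemma qcard_supermodular (a b : Sym2 V → Bool) :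
    qcard (rcRel G a) + qcard (rcRel G b) ≤
      qcard (rcRel G (a ⊓ b)) + qcard (rcRel G (a ⊔ b)) := by
  classical
  set D : Finset (Sym2 V) := Finset.univ.filter (fun e => b e = true ∧ a e = false) with hD
  have h1 : openup (a ⊓ b) D = b := by
    funext e
    simp only [openup, hD, Finset.mem_filter, Finset.mem_univ, true_and, Pi.inf_apply]
    cases ha : a e <;> cases hb : b e <;> simp [ha, hb]
  have h2 : openup a D = a ⊔ b := by
    funext e
    simp only [openup, hD, Finset.mem_filter, Finset.mem_univ, true_and, Pi.sup_apply]
    cases ha : a e <;> cases hb : b e <;> simp [ha, hb]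
  have := qcard_chain G D (a ⊓ b) a inf_le_left
  rw [h1, h2] at this
  omega

end Graph2

section W
variable {V : Type} [Fintype V] [DecidableEq V] (G : SimpleGraph V) [DecidableRel G.Adj]

lemma rcOpen_le (ω : Sym2 V → Bool) : rcOpen G ω ≤ G.edgeFinset.card :=
  Finset.card_filter_le _ _

lemma rcOpen_monotone : Monotone (fun ω => rcOpen G ω) := by
  intro ω ω' h
  apply Finset.card_le_card
  intro e he
  rw [Finset.mem_filter] at he ⊢
  refine ⟨he.1, ?_⟩
  have := h e
  rw [he.2] at this
  exact le_antisymm (Bool.le_true _) this |>.symm ▸ (by revert this; cases ω' e <;> simp)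

lemma rcOpen_inf_sup (a b : Sym2 V → Bool) :
    rcOpen G (a ⊓ b) + rcOpen G (a ⊔ b) = rcOpen G a + rcOpen G b := by
  classical
  simp only [rcOpen, Finset.card_filter]
  rw [← Finset.sum_add_distrib, ← Finset.sum_add_distrib]
  refine Finset.sum_congr rfl (fun e _ => ?_)
  have h1 : (a ⊓ b) e = (a e && b e) := by
    rw [Pi.inf_apply]; cases a e <;> cases b e <;> rfl
  have h2 : (a ⊔ b) e = (a e || b e) := by
    rw [Pi.sup_apply]; cases a e <;> cases b e <;> rfl
  rw [h1, h2]
  cases ha : a e <;> cases hb : b e <;> simp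

lemma rcClusters0_eq_qcard (ω : Sym2 V → Bool) :
    rcClusters0 G ω = qcard (rcRel G ω) := rfl

lemma rcClusters0_supermod (a b : Sym2 V → Bool) :
    rcClusters0 G a + rcClusters0 G b ≤ rcClusters0 G (a ⊓ b) + rcClusters0 G (a ⊔ b) := by
  rw [rcClusters0_eq_qcard, rcClusters0_eq_qcard, rcClusters0_eq_qcard, rcClusters0_eq_qcard]
  exact qcard_supermodular G a b

variable {p q : ℝ}

lemma rcWeight0_pos (hq : 1 ≤ q) (hp0 : 0 < p) (hp1 : p < 1) (ω : Sym2 V → Bool) : 0 < rcWeight0 G p q ω := by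
  unfold rcWeight0
  have hq0 : (0:ℝ) < q := lt_of_lt_of_le one_pos hq
  have hp1' : (0:ℝ) < 1 - p := by linarith
  positivity

lemma rcWeight0_supermod (hq : 1 ≤ q) (hp0 : 0 < p) (hp1 : p < 1) (a b : Sym2 V → Bool) :
    rcWeight0 G p q a * rcWeight0 G p q b ≤
      rcWeight0 G p q (a ⊓ b) * rcWeight0 G p q (a ⊔ b) := by
  unfold rcWeight0
  have hq0 : (0:ℝ) < q := lt_of_lt_of_le one_pos hq
  have hp1' : (0:ℝ) < 1 - p := by linarith
  set m := G.edgeFinset.card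
  have hopen := rcOpen_inf_sup G a b
  have h1 : p ^ rcOpen G a * p ^ rcOpen G b
      = p ^ rcOpen G (a ⊓ b) * p ^ rcOpen G (a ⊔ b) := by
    rw [← pow_add, ← pow_add, ← hopen]
  have h2 : (1-p) ^ (m - rcOpen G a) * (1-p) ^ (m - rcOpen G b)
      = (1-p) ^ (m - rcOpen G (a ⊓ b)) * (1-p) ^ (m - rcOpen G (a ⊔ b)) := by
    rw [← pow_add, ← pow_add]
    congr 1
    have l1 := rcOpen_le G a
    have l2 := rcOpen_le G b
    have l3 := rcOpen_le G (a ⊓ b)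
    have l4 := rcOpen_le G (a ⊔ b)
    omega
  have h3 : q ^ rcClusters0 G a * q ^ rcClusters0 G b
      ≤ q ^ rcClusters0 G (a ⊓ b) * q ^ rcClusters0 G (a ⊔ b) := by
    rw [← pow_add, ← pow_add]
    exact pow_le_pow_right₀ hq (rcClusters0_supermod G a b)
  calc q ^ rcClusters0 G a * p ^ rcOpen G a * (1 - p) ^ (m - rcOpen G a) *
        (q ^ rcClusters0 G b * p ^ rcOpen G b * (1 - p) ^ (m - rcOpen G b))
      = (q ^ rcClusters0 G a * q ^ rcClusters0 G b) *
        ((p ^ rcOpen G a * p ^ rcOpen G b) *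
          ((1-p) ^ (m - rcOpen G a) * (1-p) ^ (m - rcOpen G b))) := by ring
    _ ≤ (q ^ rcClusters0 G (a ⊓ b) * q ^ rcClusters0 G (a ⊔ b)) *
        ((p ^ rcOpen G (a ⊓ b) * p ^ rcOpen G (a ⊔ b)) *
          ((1-p) ^ (m - rcOpen G (a ⊓ b)) * (1-p) ^ (m - rcOpen G (a ⊔ b)))) := by
        rw [h1, h2]
        apply mul_le_mul_of_nonneg_right h3
        positivity
    _ = _ := by ring

end W

section Final
variable {V : Type} [Fintype V] [DecidableEq V] (G : SimpleGraph V) [DecidableRel G.Adj]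

lemma sum_mul_indicator (A : Finset (Sym2 V → Bool)) (F : (Sym2 V → Bool) → ℝ) :
    ∑ ω : Sym2 V → Bool, F ω * (if ω ∈ A then (1:ℝ) else 0) = ∑ ω ∈ A, F ω := by
  simp only [mul_ite, mul_one, mul_zero]
  rw [Finset.sum_ite_mem, Finset.univ_inter]

lemma rc_fkg {p q : ℝ} (hq : 1 ≤ q) (hp0 : 0 < p) (hp1 : p < 1)
    (A : Finset (Sym2 V → Bool))
    (hA : ∀ ω ω' : Sym2 V → Bool, ω ≤ ω' → ω ∈ A → ω' ∈ A) :
    (∑ ω : Sym2 V → Bool, (rcOpen G ω : ℝ) * rcWeight0 G p q ω) * (∑ ω ∈ A, rcWeight0 G p q ω)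
      ≤ (∑ ω : Sym2 V → Bool, rcWeight0 G p q ω) *
          (∑ ω ∈ A, (rcOpen G ω : ℝ) * rcWeight0 G p q ω) := by
  classical
  have h := fkg (fun ω => (rcOpen G ω : ℝ)) (fun ω => if ω ∈ A then (1:ℝ) else 0)
    (rcWeight0 G p q)
    (fun ω => (rcWeight0_pos G hq hp0 hp1 ω).le)
    (fun ω => Nat.cast_nonneg _)
    (fun ω => by dsimp; split <;> norm_num)
    (fun ω ω' hle => Nat.cast_le.mpr (rcOpen_monotone G hle))
    (fun ω ω' hle => by
      dsimp
      by_cases hω : ω ∈ A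
      · rw [if_pos hω, if_pos (hA ω ω' hle hω)]
      · rw [if_neg hω]; split <;> norm_num)
    (fun a b => rcWeight0_supermod G hq hp0 hp1 a b)
  rw [sum_mul_indicator] at h
  have e1 : ∀ ω, rcWeight0 G p q ω * ((rcOpen G ω : ℝ) * (if ω ∈ A then (1:ℝ) else 0))
      = ((rcOpen G ω : ℝ) * rcWeight0 G p q ω) * (if ω ∈ A then (1:ℝ) else 0) := by
    intro ω; ring
  simp only [e1] at h
  rw [sum_mul_indicator] at h
  have e2 : ∀ ω, rcWeight0 G p q ω * (rcOpen G ω : ℝ)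
      = (rcOpen G ω : ℝ) * rcWeight0 G p q ω := fun ω => mul_comm _ _
  simp only [e2] at h
  exact h

end Final

section Deriv
variable {V : Type} [Fintype V] [DecidableEq V] (G : SimpleGraph V) [DecidableRel G.Adj]

lemma deriv_term_eq {c p : ℝ} (hp0 : p ≠ 0) (hp1' : (1:ℝ) - p ≠ 0) (a b : ℕ) :
    c * ((a:ℝ) * p ^ (a-1)) * (1-p) ^ b + (c * p ^ a) * (((b:ℝ) * (1-p) ^ (b-1)) * (-1))
      = (c * p ^ a * (1-p) ^ b) * (((a:ℝ) * (1-p) - (b:ℝ) * p) / (p * (1-p))) := by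
  have hda : (a:ℝ) * p ^ (a-1) = (a:ℝ) * p ^ a / p := by
    cases a with
    | zero => simp
    | succ n =>
      rw [Nat.add_sub_cancel, pow_succ]
      field_simp
  have hdb : (b:ℝ) * (1-p) ^ (b-1) = (b:ℝ) * (1-p) ^ b / (1-p) := by
    cases b with
    | zero => simp
    | succ n =>
      rw [Nat.add_sub_cancel, pow_succ]
      field_simp
  rw [hda, hdb]
  field_simp
  ring

lemma hasDerivAt_rcWeight0 {p q : ℝ} (hp0 : 0 < p) (hp1 : p < 1) (ω : Sym2 V → Bool) :
    HasDerivAt (fun p' => rcWeight0 G p' q ω)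
      (rcWeight0 G p q ω * (((rcOpen G ω : ℝ) - (G.edgeFinset.card : ℝ) * p) / (p * (1-p)))) p := by
  set a := rcOpen G ω
  set b := G.edgeFinset.card - rcOpen G ω
  set c := q ^ rcClusters0 G ω
  have h1 : HasDerivAt (fun p' : ℝ => p' ^ a) ((a:ℝ) * p ^ (a-1)) p := hasDerivAt_pow a p
  have hin : HasDerivAt (fun p' : ℝ => 1 - p') (-1) p := by
    simpa using (hasDerivAt_id p).const_sub 1
  have h2 : HasDerivAt (fun p' : ℝ => (1 - p') ^ b) (((b:ℝ) * (1-p) ^ (b-1)) * (-1)) p :=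
    HasDerivAt.comp p (hasDerivAt_pow b (1-p)) hin
  have h3 := (h1.const_mul c).mul h2
  have heq : rcWeight0 G p q ω * (((a:ℝ) - (G.edgeFinset.card : ℝ) * p) / (p * (1-p)))
      = c * ((a:ℝ) * p ^ (a-1)) * (1-p) ^ b + (c * p ^ a) * (((b:ℝ) * (1-p) ^ (b-1)) * (-1)) := by
    rw [deriv_term_eq (ne_of_gt hp0) (by linarith) a b]
    have hab : (b:ℝ) = (G.edgeFinset.card : ℝ) - (a:ℝ) := by
      have := rcOpen_le G ω
      rw [show b = G.edgeFinset.card - rcOpen G ω from rfl]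
      push_cast [Nat.cast_sub this]
      ring
    rw [show rcWeight0 G p q ω = c * p ^ a * (1-p) ^ b from rfl, hab]
    ring_nf
  rw [heq]
  exact h3

end Deriv


/-- For `q ≥ 1`, `p ∈ (0,1)` and an increasing event `A`,
`(d/dp) φ_p(A) = (1/(p(1−p))) Cov_p(o(ω), 1_A)`, and this derivative is nonnegative. -/
theorem stmt13 {V : Type} [Fintype V] [DecidableEq V] (G : SimpleGraph V)
    [DecidableRel G.Adj] (q : ℝ) (hq : 1 ≤ q) (p : ℝ) (hp0 : 0 < p) (hp1 : p < 1)
    (A : Finset (Sym2 V → Bool))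
    (hA : ∀ ω ω' : Sym2 V → Bool, ω ≤ ω' → ω ∈ A → ω' ∈ A) :
    HasDerivAt (fun p' => rcProb0 G p' q A)
      ((1 / (p * (1 - p))) *
        ((∑ ω ∈ A, (rcOpen G ω : ℝ) * rcPoint0 G p q ω) -
          (∑ ω : Sym2 V → Bool, (rcOpen G ω : ℝ) * rcPoint0 G p q ω) *
            (∑ ω ∈ A, rcPoint0 G p q ω))) p ∧
    0 ≤ (1 / (p * (1 - p))) *
        ((∑ ω ∈ A, (rcOpen G ω : ℝ) * rcPoint0 G p q ω) -
          (∑ ω : Sym2 V → Bool, (rcOpen G ω : ℝ) * rcPoint0 G p q ω) *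
            (∑ ω ∈ A, rcPoint0 G p q ω)) := by
  classical
  set m : ℕ := G.edgeFinset.card with hm
  set w : (Sym2 V → Bool) → ℝ := rcWeight0 G p q with hw
  set Z : ℝ := ∑ ω : Sym2 V → Bool, w ω with hZ
  set N : ℝ := ∑ ω ∈ A, w ω with hN
  set S : ℝ := ∑ ω : Sym2 V → Bool, (rcOpen G ω : ℝ) * w ω with hS
  set SA : ℝ := ∑ ω ∈ A, (rcOpen G ω : ℝ) * w ω with hSA
  have hc : (0:ℝ) < p * (1 - p) := mul_pos hp0 (by linarith)
  have hZpos : 0 < Z := Finset.sum_pos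
    (fun ω _ => rcWeight0_pos G hq hp0 hp1 ω) Finset.univ_nonempty
  have hZne : Z ≠ 0 := ne_of_gt hZpos
  have hcne : p * (1 - p) ≠ 0 := ne_of_gt hc
  -- the three sums in the statement
  have hs1 : ∑ ω ∈ A, (rcOpen G ω : ℝ) * rcPoint0 G p q ω = SA / Z := by
    rw [hSA, Finset.sum_div]
    exact Finset.sum_congr rfl (fun ω _ => by rw [rcPoint0, mul_div_assoc])
  have hs2 : ∑ ω : Sym2 V → Bool, (rcOpen G ω : ℝ) * rcPoint0 G p q ω = S / Z := by
    rw [hS, Finset.sum_div]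
    exact Finset.sum_congr rfl (fun ω _ => by rw [rcPoint0, mul_div_assoc])
  have hs3 : ∑ ω ∈ A, rcPoint0 G p q ω = N / Z := by
    rw [hN, Finset.sum_div]
    exact Finset.sum_congr rfl (fun ω _ => by rw [rcPoint0])
  have key := rc_fkg G hq hp0 hp1 A hA
  -- key : S * N ≤ Z * SA
  constructor
  · -- derivative
    have hDN : HasDerivAt (fun p' => ∑ ω ∈ A, rcWeight0 G p' q ω)
        (∑ ω ∈ A, w ω * (((rcOpen G ω : ℝ) - (m:ℝ) * p) / (p * (1-p)))) p :=
      HasDerivAt.fun_sum (fun ω _ => hasDerivAt_rcWeight0 G hp0 hp1 ω)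
    have hDZ : HasDerivAt (fun p' => ∑ ω : Sym2 V → Bool, rcWeight0 G p' q ω)
        (∑ ω : Sym2 V → Bool, w ω * (((rcOpen G ω : ℝ) - (m:ℝ) * p) / (p * (1-p)))) p :=
      HasDerivAt.fun_sum (fun ω _ => hasDerivAt_rcWeight0 G hp0 hp1 ω)
    have hdiv := hDN.div hDZ hZne
    have expand : ∀ B : Finset (Sym2 V → Bool),
        ∑ ω ∈ B, w ω * (((rcOpen G ω : ℝ) - (m:ℝ) * p) / (p * (1-p)))
          = 1 / (p * (1-p)) * (∑ ω ∈ B, (rcOpen G ω : ℝ) * w ω - (m:ℝ) * p * ∑ ω ∈ B, w ω) := by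
      intro B
      have h : ∀ ω, w ω * (((rcOpen G ω : ℝ) - (m:ℝ) * p) / (p * (1-p)))
          = 1/(p*(1-p)) * ((rcOpen G ω : ℝ) * w ω) - 1/(p*(1-p)) * ((m:ℝ) * p * w ω) := fun ω => by
        field_simp
      simp only [h]
      rw [Finset.sum_sub_distrib, ← Finset.mul_sum, ← Finset.mul_sum, ← Finset.mul_sum, ← mul_sub]
    have hDNval : ∑ ω ∈ A, w ω * (((rcOpen G ω : ℝ) - (m:ℝ) * p) / (p * (1-p)))
        = (1 / (p * (1-p))) * (SA - (m:ℝ) * p * N) := expand A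
    have hDZval : ∑ ω : Sym2 V → Bool, w ω * (((rcOpen G ω : ℝ) - (m:ℝ) * p) / (p * (1-p)))
        = (1 / (p * (1-p))) * (S - (m:ℝ) * p * Z) := expand Finset.univ
    rw [hDNval, hDZval] at hdiv
    have hfun : (fun p' => rcProb0 G p' q A)
        = fun p' => (∑ ω ∈ A, rcWeight0 G p' q ω) / ∑ ω : Sym2 V → Bool, rcWeight0 G p' q ω := rfl
    rw [hfun, hs1, hs2, hs3]
    refine hdiv.congr_deriv ?_
    rw [hN, hZ]
    field_simp
    ring
  · rw [hs1, hs2, hs3]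
    have heq : SA / Z - S / Z * (N / Z) = (SA * Z - S * N) / (Z * Z) := by
      field_simp
    rw [heq]
    have h0 : 0 ≤ SA * Z - S * N := by nlinarith [key]
    have : (0:ℝ) ≤ 1 / (p * (1 - p)) := by positivity
    exact mul_nonneg this (div_nonneg h0 (by positivity))
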